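/- arXiv:1601.03199 — 2 statements merged into one kernel-verified Lean document; each statement's English description precedes it below -/
import Mathlib

section
/- For all x > 0 one has Ψ⁴(x) + (2/x)·Ψ(x) − 1 < 0, where Ψ(x) = I₁(x)/I₀(x). -/
open Real Filter Topology

/-- The modified Bessel function of the first kind of real order `ν`. -/
noncomputable def besselI (ν x : ℝ) : ℝ :=
  ∑' m : ℕ, (x / 2) ^ (2 * (m : ℝ) + ν) / ((m.factorial : ℝ) * Real.Gamma ((m : ℝ) + ν + 1))

/-- `Ψ_ν(x) = I_{ν+1}(x) / I_ν(x)`. -/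
noncomputable def psi (ν x : ℝ) : ℝ := besselI (ν + 1) x / besselI ν x

noncomputable def B0 (x : ℝ) : ℝ :=
  ∑' m : ℕ, ((x/2)^2)^m / ((m.factorial : ℝ) * m.factorial)
noncomputable def B1 (x : ℝ) : ℝ :=
  ∑' m : ℕ, ((x/2)^2)^m * (x/2) / ((m.factorial : ℝ) * (m+1).factorial)

lemma summable_cpf (c q : ℝ) : Summable (fun m : ℕ => c * q ^ m / m.factorial) := by
  simpa [mul_div_assoc] using (Real.summable_pow_div_factorial q).mul_left c

lemma fact_ge_one (m : ℕ) : (1:ℝ) ≤ (m.factorial : ℝ) := by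
  exact_mod_cast Nat.one_le_iff_ne_zero.mpr (Nat.factorial_ne_zero m)

lemma fact_pos' (m : ℕ) : (0:ℝ) < (m.factorial : ℝ) := lt_of_lt_of_le one_pos (fact_ge_one m)

lemma summable_B0 (x : ℝ) :
    Summable (fun m : ℕ => ((x/2)^2)^m / ((m.factorial : ℝ) * m.factorial)) := by
  refine Summable.of_nonneg_of_le (fun m => by positivity)
    (fun m => ?_) (by simpa using summable_cpf 1 ((x/2)^2))
  have h := fact_pos' m
  gcongr
  exact le_mul_of_one_le_right (fact_pos' m).le (fact_ge_one m)

lemma summable_B1 (x : ℝ) :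
    Summable (fun m : ℕ => ((x/2)^2)^m * (x/2) / ((m.factorial : ℝ) * (m+1).factorial)) := by
  refine Summable.of_norm_bounded (summable_cpf |x/2| ((x/2)^2)) (fun m => ?_)
  rw [Real.norm_eq_abs, abs_div, abs_mul, abs_pow, abs_pow, sq_abs]
  rw [mul_comm (|x/2|)]
  apply div_le_div₀ (by positivity) le_rfl (by positivity)
  have h1 := fact_ge_one m
  have h2 := fact_ge_one (m+1)
  calc |((m.factorial : ℝ) * (m+1).factorial)| = (m.factorial : ℝ) * (m+1).factorial := by
        rw [abs_of_nonneg]; positivity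
    _ ≥ (m.factorial : ℝ) := le_mul_of_one_le_right (fact_pos' m).le h2

lemma B0_ge_one (x : ℝ) : 1 ≤ B0 x := by
  have h := Summable.le_tsum (summable_B0 x) 0 (fun j _ => by positivity)
  simpa [B0] using h

lemma B0_pos (x : ℝ) : 0 < B0 x := lt_of_lt_of_le one_pos (B0_ge_one x)

lemma B1_pos {x : ℝ} (hx : 0 < x) : 0 < B1 x := by
  have h := Summable.le_tsum (summable_B1 x) 0 (fun j _ => by positivity)
  have : x/2 ≤ B1 x := by simpa [B1] using h
  linarith

lemma B1_le {x : ℝ} (hx : 0 ≤ x) : B1 x ≤ (x/2) * B0 x := by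
  rw [B0, ← tsum_mul_left]
  refine Summable.tsum_le_tsum (fun m => ?_) (summable_B1 x) ((summable_B0 x).mul_left _)
  rw [mul_comm (((x/2)^2)^m) (x/2), mul_div_assoc]
  refine mul_le_mul_of_nonneg_left ?_ (by linarith : (0:ℝ) ≤ x/2)
  have h1 := fact_pos' m
  apply div_le_div_of_nonneg_left (by positivity) (by positivity)
  exact mul_le_mul_of_nonneg_left (by exact_mod_cast Nat.factorial_le (Nat.le_succ m)) h1.le

lemma lower_bound {x : ℝ} (hx : 0 < x) : x^3/8 ≤ x * B0 x - 2 * B1 x := by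
  have h0 : x * B0 x = ∑' m : ℕ, x * (((x/2)^2)^m / ((m.factorial : ℝ) * m.factorial)) :=
    tsum_mul_left.symm
  have h1 : 2 * B1 x = ∑' m : ℕ, 2 * (((x/2)^2)^m * (x/2) / ((m.factorial : ℝ) * (m+1).factorial)) :=
    tsum_mul_left.symm
  rw [h0, h1, ← Summable.tsum_sub ((summable_B0 x).mul_left x) ((summable_B1 x).mul_left 2)]
  have key : ∀ m : ℕ, 0 ≤ x * (((x/2)^2)^m / ((m.factorial : ℝ) * m.factorial))
      - 2 * (((x/2)^2)^m * (x/2) / ((m.factorial : ℝ) * (m+1).factorial)) := by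
    intro m
    rw [sub_nonneg]
    have e1 : 2 * (((x/2)^2)^m * (x/2) / ((m.factorial : ℝ) * (m+1).factorial))
        = x * (((x/2)^2)^m / ((m.factorial : ℝ) * (m+1).factorial)) := by ring
    rw [e1]
    refine mul_le_mul_of_nonneg_left ?_ hx.le
    have h1 := fact_pos' m
    apply div_le_div_of_nonneg_left (by positivity) (by positivity)
    exact mul_le_mul_of_nonneg_left (by exact_mod_cast Nat.factorial_le (Nat.le_succ m)) h1.le
  have := Summable.le_tsum (((summable_B0 x).mul_left x).sub ((summable_B1 x).mul_left 2)) 1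
    (fun j _ => key j)
  refine le_trans (le_of_eq ?_) this
  norm_num [Nat.factorial]
  ring

lemma B0_le_43 {x : ℝ} (hx0 : 0 ≤ x) (hx1 : x ≤ 1) : B0 x ≤ 4/3 := by
  have hg : ∑' m : ℕ, ((1:ℝ)/4)^m = 4/3 := by
    rw [tsum_geometric_of_lt_one (by norm_num) (by norm_num)]
    norm_num
  rw [← hg]
  refine Summable.tsum_le_tsum (fun m => ?_) (summable_B0 x) (summable_geometric_of_lt_one (by norm_num) (by norm_num))
  have h1 : ((x/2)^2)^m ≤ ((1:ℝ)/4)^m := by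
    apply pow_le_pow_left₀ (by positivity)
    nlinarith
  calc ((x/2)^2)^m / ((m.factorial : ℝ) * m.factorial) ≤ ((x/2)^2)^m / 1 := by
        apply div_le_div_of_nonneg_left (by positivity) one_pos
        have := fact_ge_one m; nlinarith
    _ ≤ (1/4)^m := by rw [div_one]; exact h1

lemma hasDerivAt_sq_half (y : ℝ) : HasDerivAt (fun z : ℝ => (z/2)^2) (y/2) y := by
  have h := ((hasDerivAt_id y).div_const 2).pow 2
  refine h.congr_deriv ?_
  norm_num
  ring

set_option maxHeartbeats 1000000 in
lemma hasDerivAt_B0 (x : ℝ) : HasDerivAt B0 (B1 x) x := by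
  set R : ℝ := |x| + 1 with hR
  have hR1 : 1 ≤ R := le_add_of_nonneg_left (abs_nonneg x)
  have hR0 : 0 < R := lt_of_lt_of_le one_pos hR1
  set u : ℕ → ℝ := fun m => R * (2*R^2)^m / m.factorial with hu
  have hus : Summable u := summable_cpf R (2*R^2)
  set g : ℕ → ℝ → ℝ := fun m z => ((z/2)^2)^m / ((m.factorial : ℝ) * m.factorial) with hg
  set g' : ℕ → ℝ → ℝ :=
    fun m z => ((m : ℝ) * ((z/2)^2)^(m-1) * (z/2)) / ((m.factorial : ℝ) * m.factorial) with hg'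
  have hder : ∀ m : ℕ, ∀ y ∈ Set.Ioo (-R) R, HasDerivAt (g m) (g' m y) y := by
    intro m y _
    exact ((hasDerivAt_sq_half y).pow m).div_const _
  have hbound : ∀ m : ℕ, ∀ y ∈ Set.Ioo (-R) R, ‖g' m y‖ ≤ u m := by
    intro m y hy
    have hya : |y| ≤ R := abs_le.mpr ⟨hy.1.le, hy.2.le⟩
    have hQ : (y/2)^2 ≤ R^2 := by nlinarith [sq_abs y, abs_nonneg y]
    have hQn : ((y/2)^2)^(m-1) ≤ (R^2)^m := by
      calc ((y/2)^2)^(m-1) ≤ (R^2)^(m-1) := pow_le_pow_left₀ (sq_nonneg _) hQ _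
        _ ≤ (R^2)^m := pow_le_pow_right₀ (by nlinarith) (Nat.sub_le m 1)
    have hmb : (m:ℝ) ≤ 2^m := by exact_mod_cast (Nat.lt_two_pow_self).le
    have hfp := fact_pos' m
    rw [hg', Real.norm_eq_abs, abs_div, abs_of_pos (by positivity : (0:ℝ) < (m.factorial : ℝ) * m.factorial)]
    refine div_le_div₀ (by positivity) ?_ hfp (le_mul_of_one_le_right hfp.le (fact_ge_one m))
    rw [abs_mul, abs_mul]
    have h1 : |(m:ℝ)| * |((y/2)^2)^(m-1)| ≤ 2^m * (R^2)^m := by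
      rw [abs_of_nonneg (by positivity : (0:ℝ) ≤ (m:ℝ)),
        abs_of_nonneg (by positivity : (0:ℝ) ≤ ((y/2)^2)^(m-1))]
      exact mul_le_mul hmb hQn (by positivity) (by positivity)
    have h2 : |y/2| ≤ R := by rw [abs_div]; simp only [abs_two]; nlinarith
    calc |(m:ℝ)| * |((y/2)^2)^(m-1)| * |y/2| ≤ 2^m * (R^2)^m * R :=
          mul_le_mul h1 h2 (abs_nonneg _) (by positivity)
      _ = R * (2*R^2)^m := by rw [mul_pow]; ring
  have hmem : x ∈ Set.Ioo (-R) R := by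
    constructor <;> cases abs_lt.mp (by rw [hR]; linarith [abs_nonneg x] : |x| < R) <;> linarith
  have hkey := hasDerivAt_tsum_of_isPreconnected hus isOpen_Ioo (convex_Ioo _ _).isPreconnected
    hder hbound (show (0:ℝ) ∈ Set.Ioo (-R) R by constructor <;> nlinarith)
    (by simpa [hg] using summable_B0 0) hmem
  have hsum' : Summable fun m => g' m x :=
    Summable.of_norm_bounded hus (fun m => hbound m x hmem)
  have heq : ∑' m, g' m x = B1 x := by
    rw [hsum'.tsum_eq_zero_add]
    have h0 : g' 0 x = 0 := by simp [hg']
    rw [h0, zero_add, B1]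
    refine tsum_congr (fun m => ?_)
    simp only [hg', Nat.add_sub_cancel, Nat.factorial_succ]
    have hfp := fact_pos' m
    have hfp1 := fact_pos' (m+1)
    push_cast
    field_simp
  rw [← heq]
  exact hkey

set_option maxHeartbeats 1000000 in
lemma hasDerivAt_B1 {x : ℝ} (hx : x ≠ 0) : HasDerivAt B1 (B0 x - B1 x / x) x := by
  set R : ℝ := |x| + 1 with hR
  have hR1 : 1 ≤ R := le_add_of_nonneg_left (abs_nonneg x)
  have hR0 : 0 < R := lt_of_lt_of_le one_pos hR1
  set u : ℕ → ℝ := fun m => (2*R^2) * (2*R^2)^m / m.factorial with hu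
  have hus : Summable u := summable_cpf _ _
  set g : ℕ → ℝ → ℝ :=
    fun m z => ((z/2)^2)^m * (z/2) / ((m.factorial : ℝ) * (m+1).factorial) with hg
  set g' : ℕ → ℝ → ℝ := fun m z =>
    ((m : ℝ) * ((z/2)^2)^(m-1) * (z/2) * (z/2) + ((z/2)^2)^m * (1/2))
      / ((m.factorial : ℝ) * (m+1).factorial) with hg'
  have hhalf : ∀ y : ℝ, HasDerivAt (fun z : ℝ => z/2) (1/2) y := fun y => by
    simpa using (hasDerivAt_id y).div_const 2
  have hder : ∀ m : ℕ, ∀ y ∈ Set.Ioo (-R) R, HasDerivAt (g m) (g' m y) y := by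
    intro m y _
    exact (((hasDerivAt_sq_half y).pow m).mul (hhalf y)).div_const _
  have hbound : ∀ m : ℕ, ∀ y ∈ Set.Ioo (-R) R, ‖g' m y‖ ≤ u m := by
    intro m y hy
    have hya : |y| ≤ R := abs_le.mpr ⟨hy.1.le, hy.2.le⟩
    have hy2 : |y/2| ≤ R := by rw [abs_div]; simp only [abs_two]; nlinarith
    have hQ : (y/2)^2 ≤ R^2 := by nlinarith [sq_abs y, abs_nonneg y]
    have hR2 : (1:ℝ) ≤ R^2 := by nlinarith
    have hQn : ((y/2)^2)^(m-1) ≤ (R^2)^m := by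
      calc ((y/2)^2)^(m-1) ≤ (R^2)^(m-1) := pow_le_pow_left₀ (sq_nonneg _) hQ _
        _ ≤ (R^2)^m := pow_le_pow_right₀ hR2 (Nat.sub_le m 1)
    have hQm : ((y/2)^2)^m ≤ (R^2)^m := pow_le_pow_left₀ (sq_nonneg _) hQ _
    have hmb : (m:ℝ) ≤ 2^m := by exact_mod_cast (Nat.lt_two_pow_self).le
    have hfp := fact_pos' m
    have hfp1 := fact_pos' (m+1)
    have hA : |(m:ℝ) * ((y/2)^2)^(m-1) * (y/2) * (y/2)| ≤ R^2 * (2*R^2)^m := by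
      rw [abs_mul, abs_mul, abs_mul,
        abs_of_nonneg (by positivity : (0:ℝ) ≤ (m:ℝ)),
        abs_of_nonneg (by positivity : (0:ℝ) ≤ ((y/2)^2)^(m-1))]
      have : (m:ℝ) * ((y/2)^2)^(m-1) * |y/2| * |y/2| ≤ 2^m * (R^2)^m * R * R := by
        refine mul_le_mul (mul_le_mul (mul_le_mul hmb hQn (by positivity) (by positivity))
          hy2 (abs_nonneg _) (by positivity)) hy2 (abs_nonneg _) (by positivity)
      calc (m:ℝ) * ((y/2)^2)^(m-1) * |y/2| * |y/2| ≤ 2^m * (R^2)^m * R * R := this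
        _ ≤ R^2 * (2*R^2)^m := by rw [mul_pow]; nlinarith [pow_pos (by nlinarith : (0:ℝ) < R^2) m, pow_pos (by norm_num : (0:ℝ) < (2:ℝ)) m]
    have hB : |((y/2)^2)^m * (1/2)| ≤ R^2 * (2*R^2)^m := by
      rw [abs_mul, abs_of_nonneg (by positivity : (0:ℝ) ≤ ((y/2)^2)^m)]
      have h1 : ((y/2)^2)^m ≤ (2*R^2)^m := le_trans hQm (pow_le_pow_left₀ (by positivity) (by nlinarith) m)
      have h2 : (0:ℝ) < (2*R^2)^m := by positivity
      rw [abs_of_nonneg (by norm_num : (0:ℝ) ≤ (1:ℝ)/2)]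
      calc ((y/2)^2)^m * (1/2) ≤ (2*R^2)^m * 1 := by
            nlinarith [pow_nonneg (sq_nonneg (y/2)) m]
        _ ≤ R^2 * (2*R^2)^m := by nlinarith [mul_le_mul_of_nonneg_left hR2 h2.le]
    rw [hg', Real.norm_eq_abs, abs_div,
      abs_of_pos (by positivity : (0:ℝ) < (m.factorial : ℝ) * (m+1).factorial)]
    refine div_le_div₀ (by positivity) ?_ hfp (le_mul_of_one_le_right hfp.le (fact_ge_one (m+1)))
    calc |(m:ℝ) * ((y/2)^2)^(m-1) * (y/2) * (y/2) + ((y/2)^2)^m * (1/2)|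
        ≤ |(m:ℝ) * ((y/2)^2)^(m-1) * (y/2) * (y/2)| + |((y/2)^2)^m * (1/2)| := abs_add_le _ _
      _ ≤ R^2 * (2*R^2)^m + R^2 * (2*R^2)^m := add_le_add hA hB
      _ = (2*R^2) * (2*R^2)^m := by ring
  have hmem : x ∈ Set.Ioo (-R) R := by
    constructor <;> cases abs_lt.mp (by rw [hR]; linarith [abs_nonneg x] : |x| < R) <;> linarith
  have hkey := hasDerivAt_tsum_of_isPreconnected hus isOpen_Ioo (convex_Ioo _ _).isPreconnected
    hder hbound (show (0:ℝ) ∈ Set.Ioo (-R) R by constructor <;> nlinarith)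
    (by simpa [hg] using summable_B1 0) hmem
  have heq : ∑' m, g' m x = B0 x - B1 x / x := by
    have hterm : ∀ m : ℕ, g' m x = ((x/2)^2)^m / ((m.factorial : ℝ) * m.factorial)
        - (((x/2)^2)^m * (x/2) / ((m.factorial : ℝ) * (m+1).factorial)) / x := by
      intro m
      have hfp := fact_pos' m
      have hfp1 := fact_pos' (m+1)
      cases m with
      | zero => simp [hg', Nat.factorial]; field_simp; ring
      | succ k =>
        have hfk := fact_pos' k
        have hfk1 := fact_pos' (k+1)
        have hfk2 := fact_pos' (k+2)
        simp only [hg', Nat.add_sub_cancel]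
        rw [Nat.factorial_succ (k+1), Nat.factorial_succ k]
        push_cast
        field_simp
        ring
    rw [tsum_congr hterm, Summable.tsum_sub (summable_B0 x) ((summable_B1 x).div_const x),
      tsum_div_const]
    rfl
  rw [← heq]
  exact hkey

lemma besselI0_eq (x : ℝ) : besselI 0 x = B0 x := by
  refine tsum_congr (fun m => ?_)
  have h1 : (2 * (m:ℝ) + 0) = ((2*m : ℕ):ℝ) := by push_cast; ring
  have h2 : ((m:ℝ) + 0 + 1) = ((m:ℕ):ℝ) + 1 := by push_cast; ring
  rw [h1, h2, Real.rpow_natCast, Real.Gamma_nat_eq_factorial, pow_mul]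

lemma besselI1_eq (x : ℝ) : besselI 1 x = B1 x := by
  refine tsum_congr (fun m => ?_)
  have h1 : (2 * (m:ℝ) + 1) = ((2*m+1 : ℕ):ℝ) := by push_cast; ring
  have h2 : ((m:ℝ) + 1 + 1) = (((m+1):ℕ):ℝ) + 1 := by push_cast; ring
  rw [h1, h2, Real.rpow_natCast, Real.Gamma_nat_eq_factorial, pow_succ, pow_mul]

lemma small_case {x : ℝ} (hx : 0 < x) (hx1 : x ≤ 1) :
    0 < x * (B0 x)^4 - 2 * B1 x * (B0 x)^3 - x * (B1 x)^4 := by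
  have hb0 := B0_pos x
  have hb1 := B1_pos hx
  have hL := lower_bound hx
  have hle := B1_le hx.le
  have h43 := B0_le_43 hx.le hx1
  have hb03 : (0:ℝ) < (B0 x)^3 := by positivity
  have e1 : x^3/8 * (B0 x)^3 ≤ x * (B0 x)^4 - 2 * B1 x * (B0 x)^3 := by
    nlinarith [mul_le_mul_of_nonneg_right hL hb03.le]
  have e2 : (B1 x)^4 ≤ ((x/2) * B0 x)^4 := pow_le_pow_left₀ hb1.le hle 4
  have e3 : x * ((x/2) * B0 x)^4 ≤ x^3/12 * (B0 x)^3 := by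
    have hxx : x^2 ≤ 1 := by nlinarith
    have : x * ((x/2) * B0 x)^4 = x^3 * (B0 x)^3 * (x^2 * B0 x) / 16 := by ring
    rw [this]
    have h1 : x^2 * B0 x ≤ 4/3 := by nlinarith
    have h2 : (0:ℝ) < x^3 * (B0 x)^3 := by positivity
    nlinarith [mul_le_mul_of_nonneg_left h1 h2.le]
  nlinarith [mul_le_mul_of_nonneg_left e2 hx.le, pow_pos hx 3]

noncomputable def Psi : ℝ → ℝ := fun y => B1 y / B0 y
noncomputable def H : ℝ → ℝ := fun y => 1 - (Psi y)^4 - 2 * Psi y / y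

lemma hasDerivAt_Psi {y : ℝ} (hy : y ≠ 0) :
    HasDerivAt Psi (1 - Psi y / y - (Psi y)^2) y := by
  have h := (hasDerivAt_B1 hy).div (hasDerivAt_B0 y) (B0_pos y).ne'
  refine h.congr_deriv ?_
  have hb := (B0_pos y).ne'
  simp only [Psi]
  field_simp

lemma hasDerivAt_H {y : ℝ} (hy : y ≠ 0) :
    HasDerivAt H (-(4 * (Psi y)^3 * (1 - Psi y / y - (Psi y)^2))
      - (2 * (1 - Psi y / y - (Psi y)^2) * y - 2 * Psi y) / y^2) y := by
  have hΨ := hasDerivAt_Psi hy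
  have h4 : HasDerivAt (fun z => (Psi z)^4) (4 * (Psi y)^3 * (1 - Psi y / y - (Psi y)^2)) y := by
    have := hΨ.pow 4
    norm_num at this
    exact this
  have hq : HasDerivAt (fun z => 2 * Psi z / z)
      ((2 * (1 - Psi y / y - (Psi y)^2) * y - 2 * Psi y * 1) / y^2) y :=
    (hΨ.const_mul 2).div (hasDerivAt_id y) hy
  have := ((hasDerivAt_const y (1:ℝ)).sub h4).sub hq
  refine this.congr_deriv ?_
  ring

lemma H_pos_small {y : ℝ} (hy : 0 < y) (hy1 : y ≤ 1) : 0 < H y := by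
  have hb0 := B0_pos y
  have hnum := small_case hy hy1
  have hrepr : H y = (y * (B0 y)^4 - 2 * B1 y * (B0 y)^3 - y * (B1 y)^4) / (y * (B0 y)^4) := by
    simp only [H, Psi]
    field_simp
    ring
  rw [hrepr]
  positivity

theorem stmt_4 (x : ℝ) (hx : 0 < x) :
    (psi 0 x) ^ 4 + (2 / x) * psi 0 x - 1 < 0 := by
  have hpsi : psi 0 x = Psi x := by
    have : psi 0 x = besselI 1 x / besselI 0 x := by norm_num [psi]
    rw [this, besselI1_eq, besselI0_eq]; rfl
  by_contra hcon
  push_neg at hcon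
  have hHx : H x ≤ 0 := by
    have h2 : (2/x) * psi 0 x = 2 * Psi x / x := by rw [hpsi]; ring
    have : H x = 1 - (Psi x)^4 - 2 * Psi x / x := rfl
    rw [this, ← h2, ← hpsi]
    linarith
  have hx1 : 1 < x := by
    by_contra hle
    push_neg at hle
    exact absurd hHx (not_le.mpr (H_pos_small hx hle))
  -- first zero argument
  set S : Set ℝ := Set.Icc 1 x ∩ H ⁻¹' Set.Iic 0 with hS
  have hcont : ContinuousOn H (Set.Icc 1 x) := by
    intro y hy
    have hy0 : y ≠ 0 := by have := hy.1; intro h; rw [h] at this; linarith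
    exact (hasDerivAt_H hy0).continuousAt.continuousWithinAt
  have hclosed : IsClosed S := by
    exact ContinuousOn.preimage_isClosed_of_isClosed hcont isClosed_Icc isClosed_Iic
  have hne : S.Nonempty := ⟨x, ⟨hx1.le, le_rfl⟩, hHx⟩
  have hbdd : BddBelow S := ⟨1, fun y hy => hy.1.1⟩
  set x₀ := sInf S with hx₀
  have hx₀S : x₀ ∈ S := hclosed.csInf_mem hne hbdd
  have hx₀Icc : x₀ ∈ Set.Icc 1 x := hx₀S.1
  have hH0 : H x₀ ≤ 0 := hx₀S.2
  have hx₀gt1 : 1 < x₀ := by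
    rcases lt_or_eq_of_le hx₀Icc.1 with h | h
    · exact h
    · exfalso; rw [← h] at hH0; exact absurd hH0 (not_le.mpr (H_pos_small one_pos le_rfl))
  have hx₀pos : 0 < x₀ := lt_trans one_pos hx₀gt1
  have hbefore : ∀ y, 1 ≤ y → y < x₀ → 0 < H y := by
    intro y h1 h2
    by_contra hc
    push_neg at hc
    have : y ∈ S := ⟨⟨h1, le_trans h2.le hx₀Icc.2⟩, hc⟩
    exact absurd (csInf_le hbdd this) (not_le.mpr h2)
  have hHzero : H x₀ = 0 := by
    refine le_antisymm hH0 ?_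
    have htend : Tendsto H (𝓝[<] x₀) (𝓝 (H x₀)) :=
      ((hasDerivAt_H hx₀pos.ne').continuousAt.tendsto).mono_left nhdsWithin_le_nhds
    refine ge_of_tendsto htend ?_
    filter_upwards [Ioo_mem_nhdsLT_of_mem (Set.mem_Ioc.mpr ⟨hx₀gt1, le_rfl⟩)] with y hy
    exact (hbefore y hy.1.le hy.2).le
  set t := Psi x₀ with ht
  have ht0 : 0 < t := div_pos (B1_pos hx₀pos) (B0_pos x₀)
  have hrel : t^4 * x₀ + 2*t = x₀ := by
    have : 1 - t^4 - 2*t/x₀ = 0 := hHzero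
    field_simp at this
    linarith
  have ht1 : t < 1 := by
    by_contra hge
    push_neg at hge
    have h14 : (1:ℝ) ≤ t^4 := one_le_pow₀ hge
    nlinarith [mul_le_mul_of_nonneg_right h14 hx₀pos.le]
  have h4 : t^4 < 1 := by nlinarith [pow_lt_one₀ ht0.le ht1 (by norm_num : 4 ≠ 0)]
  have hne4 : ((1:ℝ) - t^4) ≠ 0 := ne_of_gt (by linarith)
  have hx0eq : x₀ = 2*t/(1-t^4) := by
    rw [eq_div_iff hne4]
    linarith
  set d := -(4 * t^3 * (1 - t / x₀ - t^2)) - (2 * (1 - t / x₀ - t^2) * x₀ - 2 * t) / x₀^2 with hd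
  have hdpos : 0 < d := by
    have hdval : d = t * (1 - t^2)^3 := by
      rw [hd, hx0eq]
      field_simp
      ring
    rw [hdval]
    have : 0 < 1 - t^2 := by nlinarith
    positivity
  have hder := hasDerivAt_H hx₀pos.ne'
  rw [show (-(4 * (Psi x₀)^3 * (1 - Psi x₀ / x₀ - (Psi x₀)^2))
      - (2 * (1 - Psi x₀ / x₀ - (Psi x₀)^2) * x₀ - 2 * Psi x₀) / x₀^2) = d from rfl] at hder
  rw [hasDerivAt_iff_tendsto_slope] at hder
  have hev : ∀ᶠ y in 𝓝[<] x₀, 0 < slope H x₀ y := by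
    have := hder.eventually (eventually_gt_nhds hdpos)
    exact this.filter_mono (nhdsWithin_mono x₀ (fun y hy => ne_of_lt hy))
  have hev2 : ∀ᶠ y in 𝓝[<] x₀, y ∈ Set.Ioo 1 x₀ :=
    Ioo_mem_nhdsLT_of_mem (Set.mem_Ioc.mpr ⟨hx₀gt1, le_rfl⟩)
  obtain ⟨y, hy1, hy2⟩ := (hev.and hev2).exists
  rw [slope_def_field] at hy1
  have hylt : y < x₀ := hy2.2
  have hHy : 0 < H y := hbefore y hy2.1.le hylt
  rcases div_pos_iff.mp hy1 with ⟨h1, h2⟩ | ⟨h1, h2⟩ <;> linarith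
end

section
/- Let ν ≥ 0 and K > ν + 1. Then the transcendental equation r = Ψ_ν(2Kr) has a positive real solution, i.e., there exists r > 0 with r = Ψ_ν(2Kr), where Ψ_ν(x) = I_{ν+1}(x)/I_ν(x). -/
open Real Filter Topology

noncomputable def bTerm (ν x : ℝ) (m : ℕ) : ℝ :=
  (x / 2) ^ (2 * (m : ℝ) + ν) / ((m.factorial : ℝ) * Real.Gamma ((m : ℝ) + ν + 1))

lemma besselI_eq_tsum (ν x : ℝ) : besselI ν x = ∑' m, bTerm ν x m := rfl

lemma gammaB_pos {ν : ℝ} (hν : 0 ≤ ν) (m : ℕ) : 0 < Real.Gamma ((m : ℝ) + ν + 1) :=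
  Real.Gamma_pos_of_pos (by positivity)

lemma gammaB_ge {ν : ℝ} (hν : 0 ≤ ν) (m : ℕ) :
    (m.factorial : ℝ) * Real.Gamma (ν + 1) ≤ Real.Gamma ((m : ℝ) + ν + 1) := by
  induction m with
  | zero => simp
  | succ m ih =>
    have h1 : ((m : ℝ) + ν + 1) ≠ 0 := by positivity
    have h2 : Real.Gamma (((m + 1 : ℕ) : ℝ) + ν + 1) =
        ((m : ℝ) + ν + 1) * Real.Gamma ((m : ℝ) + ν + 1) := by
      have : (((m + 1 : ℕ) : ℝ) + ν + 1) = ((m : ℝ) + ν + 1) + 1 := by push_cast; ring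
      rw [this, Real.Gamma_add_one h1]
    rw [h2]
    have hfac : ((m + 1).factorial : ℝ) = ((m : ℝ) + 1) * (m.factorial : ℝ) := by
      push_cast [Nat.factorial_succ]; ring
    rw [hfac, mul_assoc]
    have hG : 0 ≤ (m.factorial : ℝ) * Real.Gamma (ν + 1) := by
      have := Real.Gamma_pos_of_pos (show (0:ℝ) < ν + 1 by linarith)
      positivity
    have hle : (m : ℝ) + 1 ≤ (m : ℝ) + ν + 1 := by linarith
    calc ((m : ℝ) + 1) * ((m.factorial : ℝ) * Real.Gamma (ν + 1))
        ≤ ((m : ℝ) + ν + 1) * ((m.factorial : ℝ) * Real.Gamma (ν + 1)) := by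
          exact mul_le_mul_of_nonneg_right hle hG
      _ ≤ ((m : ℝ) + ν + 1) * Real.Gamma ((m : ℝ) + ν + 1) := by
          exact mul_le_mul_of_nonneg_left ih (by positivity)

lemma bTerm_eq {ν x : ℝ} (hx : 0 < x) (m : ℕ) :
    bTerm ν x m =
      (x / 2) ^ ν * ((x / 2) ^ 2) ^ m / ((m.factorial : ℝ) * Real.Gamma ((m : ℝ) + ν + 1)) := by
  have hy : (0 : ℝ) < x / 2 := by linarith
  unfold bTerm
  rw [Real.rpow_add hy]
  have h2 : (x / 2) ^ (2 * (m : ℝ)) = ((x / 2) ^ 2) ^ m := by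
    rw [show (2 * (m : ℝ)) = ((2 * m : ℕ) : ℝ) by push_cast; ring, Real.rpow_natCast, pow_mul]
  rw [h2]
  ring

lemma bTerm_pos {ν x : ℝ} (hν : 0 ≤ ν) (hx : 0 < x) (m : ℕ) : 0 < bTerm ν x m := by
  have hy : (0 : ℝ) < x / 2 := by linarith
  have hG := gammaB_pos hν m
  have hfac : (0 : ℝ) < (m.factorial : ℝ) := by exact_mod_cast m.factorial_pos
  have hnum : 0 < (x / 2) ^ (2 * (m : ℝ) + ν) := Real.rpow_pos_of_pos hy _
  unfold bTerm
  positivity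

lemma summable_bTerm {ν x : ℝ} (hν : 0 ≤ ν) (hx : 0 < x) : Summable (bTerm ν x) := by
  have hy : (0 : ℝ) < x / 2 := by linarith
  have hΓ : 0 < Real.Gamma (ν + 1) := Real.Gamma_pos_of_pos (by linarith)
  have hb : ∀ m : ℕ, bTerm ν x m ≤
      ((x / 2) ^ ν / Real.Gamma (ν + 1)) * (((x / 2) ^ 2) ^ m / (m.factorial : ℝ)) := by
    intro m
    have hfac : (0 : ℝ) < (m.factorial : ℝ) := by exact_mod_cast m.factorial_pos
    have hG := gammaB_pos hν m
    have hle : Real.Gamma (ν + 1) ≤ Real.Gamma ((m : ℝ) + ν + 1) := by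
      have h1 : (1 : ℝ) ≤ (m.factorial : ℝ) := by exact_mod_cast m.factorial_pos
      nlinarith [gammaB_ge hν m]
    rw [bTerm_eq hx]
    calc (x / 2) ^ ν * ((x / 2) ^ 2) ^ m / ((m.factorial : ℝ) * Real.Gamma ((m : ℝ) + ν + 1))
        ≤ (x / 2) ^ ν * ((x / 2) ^ 2) ^ m / ((m.factorial : ℝ) * Real.Gamma (ν + 1)) := by
          gcongr
      _ = ((x / 2) ^ ν / Real.Gamma (ν + 1)) * (((x / 2) ^ 2) ^ m / (m.factorial : ℝ)) := by
          ring
  exact Summable.of_nonneg_of_le (fun m => (bTerm_pos hν hx m).le) hb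
    ((Real.summable_pow_div_factorial _).mul_left _)

lemma besselI_pos {ν x : ℝ} (hν : 0 ≤ ν) (hx : 0 < x) : 0 < besselI ν x := by
  rw [besselI_eq_tsum]
  exact Summable.tsum_pos (summable_bTerm hν hx) (fun m => (bTerm_pos hν hx m).le) 0
    (bTerm_pos hν hx 0)

lemma gammaB_succ {ν : ℝ} (hν : 0 ≤ ν) (m : ℕ) :
    Real.Gamma ((m : ℝ) + (ν + 1) + 1) = ((m : ℝ) + ν + 1) * Real.Gamma ((m : ℝ) + ν + 1) := by
  have h1 : ((m : ℝ) + ν + 1) ≠ 0 := by positivity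
  rw [show ((m : ℝ) + (ν + 1) + 1) = ((m : ℝ) + ν + 1) + 1 by ring, Real.Gamma_add_one h1]

lemma bTerm_succ_le {ν x : ℝ} (hν : 0 ≤ ν) (hx : 0 < x) (m : ℕ) :
    bTerm (ν + 1) x m ≤ bTerm ν x m + bTerm ν x (m + 1) := by
  have hy : (0 : ℝ) < x / 2 := by linarith
  have hG := gammaB_pos hν m
  have hfac : (0 : ℝ) < (m.factorial : ℝ) := by exact_mod_cast m.factorial_pos
  have hA : (0 : ℝ) < (m : ℝ) + ν + 1 := by positivity
  have hc : (0 : ℝ) < (x / 2) ^ ν := Real.rpow_pos_of_pos hy _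
  have ht : (0 : ℝ) < ((x / 2) ^ 2) ^ m := by positivity
  have hrr : (x / 2) ^ (ν + 1) = (x / 2) ^ ν * (x / 2) := Real.rpow_add_one (ne_of_gt hy) ν
  have hb1 : bTerm (ν + 1) x m =
      (x / 2) ^ ν * (x / 2) * ((x / 2) ^ 2) ^ m /
        ((m.factorial : ℝ) * (((m : ℝ) + ν + 1) * Real.Gamma ((m : ℝ) + ν + 1))) := by
    rw [bTerm_eq hx, gammaB_succ hν, hrr]
  have hb2 : bTerm ν x (m + 1) =
      (x / 2) ^ ν * ((x / 2) ^ 2 * ((x / 2) ^ 2) ^ m) /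
        ((((m : ℝ) + 1) * (m.factorial : ℝ)) * (((m : ℝ) + ν + 1) * Real.Gamma ((m : ℝ) + ν + 1))) := by
    rw [bTerm_eq hx]
    have hcast : (((m + 1 : ℕ) : ℝ) + ν + 1) = ((m : ℝ) + ν + 1) + 1 := by push_cast; ring
    rw [hcast, Real.Gamma_add_one (ne_of_gt hA)]
    have hfac2 : (((m + 1).factorial : ℕ) : ℝ) = ((m : ℝ) + 1) * (m.factorial : ℝ) := by
      push_cast [Nat.factorial_succ]; ring
    rw [hfac2, pow_succ]
    ring
  have hposm1 : 0 < bTerm ν x (m + 1) := bTerm_pos hν hx (m + 1)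
  have hposm : 0 < bTerm ν x m := bTerm_pos hν hx m
  rcases le_or_gt (x / 2) ((m : ℝ) + ν + 1) with hcase | hcase
  · -- bTerm (ν+1) x m ≤ bTerm ν x m
    have key : bTerm (ν + 1) x m ≤ bTerm ν x m := by
      rw [hb1, bTerm_eq hx]
      rw [div_le_div_iff₀ (by positivity) (by positivity)]
      have h0 : 0 ≤ (x / 2) ^ ν * ((x / 2) ^ 2) ^ m * ((m.factorial : ℝ) * Real.Gamma ((m : ℝ) + ν + 1)) := by positivity
      nlinarith [mul_pos (mul_pos hc ht) (mul_pos hfac hG)]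
    linarith
  · -- bTerm (ν+1) x m ≤ bTerm ν x (m+1)
    have hm1 : (m : ℝ) + 1 ≤ x / 2 := by
      have : (m : ℝ) + 1 ≤ (m : ℝ) + ν + 1 := by linarith
      linarith
    have key : bTerm (ν + 1) x m ≤ bTerm ν x (m + 1) := by
      rw [hb1, hb2]
      rw [div_le_div_iff₀ (by positivity) (by positivity)]
      have e1 : 0 < (x / 2) ^ ν * ((x / 2) ^ 2) ^ m * ((m.factorial : ℝ) * Real.Gamma ((m : ℝ) + ν + 1)) := by positivity
      nlinarith [mul_le_mul_of_nonneg_left hm1 (le_of_lt hy),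
        mul_pos (mul_pos hc ht) (mul_pos hfac (mul_pos hA hG))]
    linarith

lemma besselI_succ_le {ν x : ℝ} (hν : 0 ≤ ν) (hx : 0 < x) :
    besselI (ν + 1) x ≤ 2 * besselI ν x := by
  have ha : Summable (bTerm ν x) := summable_bTerm hν hx
  have hb : Summable (bTerm (ν + 1) x) := summable_bTerm (by linarith) hx
  have hshift : Summable (fun m => bTerm ν x (m + 1)) := (summable_nat_add_iff 1).2 ha
  have hsum : ∑' m, bTerm ν x (m + 1) ≤ ∑' m, bTerm ν x m :=
    Summable.tsum_le_tsum_of_inj (fun m => m + 1) (add_left_injective 1)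
      (fun c _ => (bTerm_pos hν hx c).le) (fun m => le_rfl) hshift ha
  calc besselI (ν + 1) x = ∑' m, bTerm (ν + 1) x m := rfl
    _ ≤ ∑' m, (bTerm ν x m + bTerm ν x (m + 1)) :=
        Summable.tsum_le_tsum (bTerm_succ_le hν hx) hb (ha.add hshift)
    _ = (∑' m, bTerm ν x m) + ∑' m, bTerm ν x (m + 1) := Summable.tsum_add ha hshift
    _ ≤ (∑' m, bTerm ν x m) + ∑' m, bTerm ν x m := by linarith
    _ = 2 * besselI ν x := by rw [besselI_eq_tsum]; ring

lemma besselI_ge_first {ν x : ℝ} (hν : 0 ≤ ν) (hx : 0 < x) :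
    (x / 2) ^ ν / Real.Gamma (ν + 1) ≤ besselI ν x := by
  have h0 : bTerm ν x 0 = (x / 2) ^ ν / Real.Gamma (ν + 1) := by
    unfold bTerm
    norm_num
  rw [besselI_eq_tsum, ← h0]
  exact Summable.le_tsum (summable_bTerm hν hx) 0 (fun m _ => (bTerm_pos hν hx m).le)

lemma besselI_le_geom {ν x : ℝ} (hν : 0 ≤ ν) (hx : 0 < x) (ht : (x / 2) ^ 2 < 1) :
    besselI ν x ≤ (x / 2) ^ ν / Real.Gamma (ν + 1) * (1 - (x / 2) ^ 2)⁻¹ := by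
  have hy : (0 : ℝ) < x / 2 := by linarith
  have hΓ : 0 < Real.Gamma (ν + 1) := Real.Gamma_pos_of_pos (by linarith)
  have ht0 : (0 : ℝ) ≤ (x / 2) ^ 2 := by positivity
  have hbound : ∀ m : ℕ, bTerm ν x m ≤
      ((x / 2) ^ ν / Real.Gamma (ν + 1)) * ((x / 2) ^ 2) ^ m := by
    intro m
    have hfac : (1 : ℝ) ≤ (m.factorial : ℝ) := by exact_mod_cast m.factorial_pos
    have hG := gammaB_pos hν m
    have hden : Real.Gamma (ν + 1) ≤ (m.factorial : ℝ) * Real.Gamma ((m : ℝ) + ν + 1) := by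
      nlinarith [gammaB_ge hν m]
    rw [bTerm_eq hx]
    calc (x / 2) ^ ν * ((x / 2) ^ 2) ^ m / ((m.factorial : ℝ) * Real.Gamma ((m : ℝ) + ν + 1))
        ≤ (x / 2) ^ ν * ((x / 2) ^ 2) ^ m / Real.Gamma (ν + 1) := by
          gcongr
      _ = ((x / 2) ^ ν / Real.Gamma (ν + 1)) * ((x / 2) ^ 2) ^ m := by ring
  have hgeom : Summable (fun m : ℕ => ((x / 2) ^ ν / Real.Gamma (ν + 1)) * ((x / 2) ^ 2) ^ m) :=
    (summable_geometric_of_lt_one ht0 ht).mul_left _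
  calc besselI ν x = ∑' m, bTerm ν x m := rfl
    _ ≤ ∑' m : ℕ, ((x / 2) ^ ν / Real.Gamma (ν + 1)) * ((x / 2) ^ 2) ^ m :=
        Summable.tsum_le_tsum hbound (summable_bTerm hν hx) hgeom
    _ = ((x / 2) ^ ν / Real.Gamma (ν + 1)) * ∑' m : ℕ, ((x / 2) ^ 2) ^ m := tsum_mul_left
    _ = (x / 2) ^ ν / Real.Gamma (ν + 1) * (1 - (x / 2) ^ 2)⁻¹ := by
        rw [tsum_geometric_of_lt_one ht0 ht]

lemma continuousOn_besselI_comp {μ K r₀ : ℝ} (hμ : 0 ≤ μ) (hKpos : 0 < K) (hr₀ : 0 < r₀) :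
    ContinuousOn (fun r => besselI μ (2 * K * r)) (Set.Icc r₀ 3) := by
  have heq : (fun r => besselI μ (2 * K * r)) = fun r => ∑' m, bTerm μ (2 * K * r) m := rfl
  rw [heq]
  apply continuousOn_tsum (u := fun m => bTerm μ (6 * K) m)
  · intro m
    unfold bTerm
    apply ContinuousOn.div_const
    apply ContinuousOn.rpow_const
    · fun_prop
    · intro r _
      right
      positivity
  · exact summable_bTerm hμ (by positivity)
  · intro m r hr
    have h1 : 0 < 2 * K * r := by nlinarith [hr.1]
    have h2 : bTerm μ (2 * K * r) m ≤ bTerm μ (6 * K) m := by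
      unfold bTerm
      have hf : (0 : ℝ) < (m.factorial : ℝ) := by exact_mod_cast m.factorial_pos
      have hG := gammaB_pos hμ m
      have hd : 0 < (m.factorial : ℝ) * Real.Gamma ((m : ℝ) + μ + 1) := by positivity
      exact (div_le_div_iff_of_pos_right hd).mpr (Real.rpow_le_rpow (by positivity)
        (by nlinarith [hr.2]) (by positivity))
    rw [Real.norm_eq_abs, abs_of_nonneg (bTerm_pos hμ h1 m).le]
    exact h2

theorem stmt_9 (ν K : ℝ) (hν : 0 ≤ ν) (hK : ν + 1 < K) :
    ∃ r : ℝ, 0 < r ∧ r = psi ν (2 * K * r) := by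
  have hKpos : 0 < K := by linarith
  have hν1 : (0 : ℝ) < ν + 1 := by linarith
  have hΓ : 0 < Real.Gamma (ν + 1) := Real.Gamma_pos_of_pos hν1
  set δ : ℝ := 1 - (ν + 1) / K with hδdef
  have hδpos : 0 < δ := by
    have : (ν + 1) / K < 1 := (div_lt_one hKpos).mpr hK
    simp only [hδdef]; linarith
  have hδlt : δ < 1 := by
    have : 0 < (ν + 1) / K := by positivity
    simp only [hδdef]; linarith
  set r₀ : ℝ := min (Real.sqrt δ / (2 * K)) 1 with hr₀def
  have hsq : 0 < Real.sqrt δ := Real.sqrt_pos.mpr hδpos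
  have hr₀pos : 0 < r₀ := lt_min (by positivity) one_pos
  have hr₀le1 : r₀ ≤ 1 := min_le_right _ _
  have hr₀3 : r₀ ≤ 3 := by linarith
  have hKr : K * r₀ ≤ Real.sqrt δ / 2 := by
    have hm := min_le_left (Real.sqrt δ / (2 * K)) 1
    calc K * r₀ ≤ K * (Real.sqrt δ / (2 * K)) :=
          mul_le_mul_of_nonneg_left hm hKpos.le
      _ = Real.sqrt δ / 2 := by field_simp
  clear_value δ r₀
  -- the function whose zero we seek
  set F : ℝ → ℝ := fun r => r * besselI ν (2 * K * r) - besselI (ν + 1) (2 * K * r) with hFdef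
  have hx₀ : 0 < 2 * K * r₀ := by positivity
  have hhalf : 2 * K * r₀ / 2 = K * r₀ := by ring
  have ht : (2 * K * r₀ / 2) ^ 2 < δ := by
    rw [hhalf]
    have h2 : (K * r₀) ^ 2 ≤ (Real.sqrt δ / 2) ^ 2 := by
      have h0 : 0 ≤ K * r₀ := by positivity
      nlinarith
    have h3 : (Real.sqrt δ / 2) ^ 2 = δ / 4 := by
      rw [div_pow, Real.sq_sqrt hδpos.le]; norm_num
    linarith [hδpos, h2, h3]
  have ht1 : (2 * K * r₀ / 2) ^ 2 < 1 := lt_trans ht hδlt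
  -- F r₀ < 0
  have hFr₀ : F r₀ < 0 := by
    have hup := besselI_le_geom hν hx₀ ht1
    have hlow := besselI_ge_first (ν := ν + 1) (by linarith) hx₀
    have hrr : (2 * K * r₀ / 2) ^ (ν + 1) = (2 * K * r₀ / 2) ^ ν * (2 * K * r₀ / 2) :=
      Real.rpow_add_one (by positivity) ν
    have hg : Real.Gamma (ν + 1 + 1) = (ν + 1) * Real.Gamma (ν + 1) :=
      Real.Gamma_add_one (ne_of_gt hν1)
    rw [hrr, hg] at hlow
    rw [hhalf] at hup hlow ht
    set t : ℝ := (K * r₀) ^ 2 with htdef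
    set c : ℝ := (K * r₀) ^ ν / Real.Gamma (ν + 1) with hcdef
    have hcpos : 0 < c := by
      have := Real.rpow_pos_of_pos (show (0:ℝ) < K * r₀ by positivity) ν
      positivity
    have h1t : (ν + 1) / K < 1 - t := by
      simp only [hδdef] at ht; linarith
    have hinv : (1 - t)⁻¹ < K / (ν + 1) := by
      have hq : 0 < (ν + 1) / K := by positivity
      have := (inv_lt_inv₀ (by linarith) hq).mpr h1t
      rwa [inv_div] at this
    have hlow' : c * (K * r₀) / (ν + 1) ≤ besselI (ν + 1) (2 * K * r₀) := by
      calc c * (K * r₀) / (ν + 1)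
          = (K * r₀) ^ ν * (K * r₀) / ((ν + 1) * Real.Gamma (ν + 1)) := by
            rw [hcdef]; field_simp
        _ ≤ besselI (ν + 1) (2 * K * r₀) := hlow
    have hchain : r₀ * besselI ν (2 * K * r₀) < c * (K * r₀) / (ν + 1) := by
      have e1 : r₀ * besselI ν (2 * K * r₀) ≤ r₀ * (c * (1 - t)⁻¹) :=
        mul_le_mul_of_nonneg_left hup hr₀pos.le
      have e2 : r₀ * (c * (1 - t)⁻¹) < r₀ * (c * (K / (ν + 1))) := by
        apply mul_lt_mul_of_pos_left _ hr₀pos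
        exact mul_lt_mul_of_pos_left hinv hcpos
      have e3 : r₀ * (c * (K / (ν + 1))) = c * (K * r₀) / (ν + 1) := by ring
      linarith
    simp only [hFdef]
    linarith
  -- F 3 > 0
  have hx₃ : 0 < 2 * K * 3 := by positivity
  have hF3 : 0 < F 3 := by
    have h2 := besselI_succ_le hν hx₃
    have h3 := besselI_pos hν hx₃
    simp only [hFdef]
    nlinarith
  -- continuity
  have hcont : ContinuousOn F (Set.Icc r₀ 3) := by
    apply ContinuousOn.sub
    · exact (continuousOn_id' _).mul (continuousOn_besselI_comp hν hKpos hr₀pos)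
    · exact continuousOn_besselI_comp (by linarith) hKpos hr₀pos
  -- intermediate value theorem
  have hmem : (0 : ℝ) ∈ Set.Icc (F r₀) (F 3) := ⟨hFr₀.le, hF3.le⟩
  obtain ⟨r, hrmem, hFr⟩ := intermediate_value_Icc hr₀3 hcont hmem
  have hrpos : 0 < r := lt_of_lt_of_le hr₀pos hrmem.1
  refine ⟨r, hrpos, ?_⟩
  have hxr : 0 < 2 * K * r := by positivity
  have hI0 : 0 < besselI ν (2 * K * r) := besselI_pos hν hxr
  have heq : r * besselI ν (2 * K * r) = besselI (ν + 1) (2 * K * r) := by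
    have : F r = 0 := hFr
    simp only [hFdef] at this
    linarith
  rw [psi, eq_div_iff (ne_of_gt hI0)]
  linarith [heq]
end
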